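/- Let f : ℝ^n → ℝ be a monotone norm (a norm satisfying f(x) ≤ f(y) whenever 0 ≤ x ≤ y coordinatewise). Then at every point x ∈ ℝ^n_{≥0}, f has a subgradient g with g ≥ 0 coordinatewise. -/

import Mathlib

/-- A monotone norm has a coordinatewise nonnegative subgradient at every
nonnegative point. -/
theorem monotone_norm_nonneg_subgradient (n : ℕ) (f : (Fin n → ℝ) → ℝ)
    (hnonneg : ∀ v, 0 ≤ f v)
    (hsub : ∀ v w, f (v + w) ≤ f v + f w)
    (hhom : ∀ (c : ℝ) (v), f (c • v) = |c| * f v)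
    (hzero : ∀ v, f v = 0 ↔ v = 0)
    (hmono : ∀ v w : Fin n → ℝ, (∀ i, 0 ≤ v i) → (∀ i, v i ≤ w i) → f v ≤ f w)
    (x : Fin n → ℝ) (hx : ∀ i, 0 ≤ x i) :
    ∃ g : Fin n → ℝ, (∀ i, 0 ≤ g i) ∧
      ∀ y : Fin n → ℝ, f x + ∑ i, g i * (y i - x i) ≤ f y := by
  classical
  have hf0 : f 0 = 0 := (hzero 0).2 rfl
  -- The sublinear "monotone envelope" F y = inf { f z : z ≥ y }
  set F : (Fin n → ℝ) → ℝ :=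
    fun y => sInf {r | ∃ z : Fin n → ℝ, (∀ i, y i ≤ z i) ∧ f z = r} with hFdef
  have hne : ∀ y : Fin n → ℝ, {r | ∃ z : Fin n → ℝ, (∀ i, y i ≤ z i) ∧ f z = r}.Nonempty :=
    fun y => ⟨f y, y, fun i => le_rfl, rfl⟩
  have hbdd : ∀ y : Fin n → ℝ, BddBelow {r | ∃ z : Fin n → ℝ, (∀ i, y i ≤ z i) ∧ f z = r} := by
    intro y
    exact ⟨0, by rintro r ⟨z, hz, rfl⟩; exact hnonneg z⟩
  have hF_le : ∀ y z : Fin n → ℝ, (∀ i, y i ≤ z i) → F y ≤ f z := by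
    intro y z hz
    exact csInf_le (hbdd y) ⟨z, hz, rfl⟩
  have hF_nonneg : ∀ y, 0 ≤ F y := by
    intro y
    apply le_csInf (hne y)
    rintro r ⟨z, hz, rfl⟩
    exact hnonneg z
  have hFx : F x = f x := by
    apply le_antisymm (hF_le x x fun i => le_rfl)
    apply le_csInf (hne x)
    rintro r ⟨z, hz, rfl⟩
    exact hmono x z hx hz
  have hsmul : ∀ c : ℝ, 0 < c → ∀ y, F (c • y) ≤ c * F y := by
    intro c hc y
    have h1 : F (c • y) / c ≤ F y := by
      apply le_csInf (hne y)
      rintro r ⟨z, hz, rfl⟩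
      have h2 : F (c • y) ≤ c * f z := by
        have h3 : F (c • y) ≤ f (c • z) := by
          apply hF_le
          intro i
          simp only [Pi.smul_apply, smul_eq_mul]
          exact mul_le_mul_of_nonneg_left (hz i) hc.le
        rwa [hhom, abs_of_pos hc] at h3
      rw [div_le_iff₀ hc]
      linarith
    rw [div_le_iff₀ hc] at h1
    linarith
  have N_hom : ∀ c : ℝ, 0 < c → ∀ y, F (c • y) = c * F y := by
    intro c hc y
    refine le_antisymm (hsmul c hc y) ?_
    have h1 : F ((1 / c) • (c • y)) ≤ (1 / c) * F (c • y) :=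
      hsmul (1 / c) (by positivity) (c • y)
    rw [smul_smul, one_div_mul_cancel hc.ne', one_smul] at h1
    rw [mul_comm, ← le_div_iff₀ hc, div_eq_mul_one_div, mul_comm]
    exact h1
  have N_add : ∀ a b, F (a + b) ≤ F a + F b := by
    intro a b
    have h : F (a + b) - F a ≤ F b := by
      apply le_csInf (hne b)
      rintro r ⟨z2, hz2, rfl⟩
      have h2 : F (a + b) - f z2 ≤ F a := by
        apply le_csInf (hne a)
        rintro s ⟨z1, hz1, rfl⟩
        have h3 : F (a + b) ≤ f (z1 + z2) := by
          apply hF_le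
          intro i
          exact add_le_add (hz1 i) (hz2 i)
        have h4 := hsub z1 z2
        linarith
      linarith
    linarith
  by_cases hx0 : x = 0
  · refine ⟨0, fun i => le_rfl, fun y => ?_⟩
    simp [hx0, hf0, hnonneg y]
  · -- Hahn–Banach extension of t • x ↦ t * f x dominated by F
    set p : (Fin n → ℝ) →ₗ.[ℝ] ℝ := LinearPMap.mkSpanSingleton x (f x) hx0 with hp
    have hfp : ∀ v : p.domain, p v ≤ F v := by
      rintro ⟨v, hv⟩
      rcases Submodule.mem_span_singleton.1 hv with ⟨c, rfl⟩
      have happ : (p ⟨c • x, hv⟩ : ℝ) = c • f x :=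
        LinearPMap.mkSpanSingleton'_apply _ _ _ c hv
      rw [happ]
      rcases lt_trichotomy c 0 with hc | hc | hc
      · have : c • f x ≤ 0 := by
          simp only [smul_eq_mul]
          exact mul_nonpos_of_nonpos_of_nonneg hc.le (hnonneg x)
        exact this.trans (hF_nonneg _)
      · subst hc; simpa using hF_nonneg (0 : Fin n → ℝ)
      · have h1 : F ((1 / c) • (c • x)) ≤ (1 / c) * F (c • x) :=
          hsmul (1 / c) (by positivity) (c • x)
        rw [smul_smul, one_div_mul_cancel hc.ne', one_smul, hFx] at h1
        simp only [smul_eq_mul]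
        rw [mul_comm, ← le_div_iff₀ hc, div_eq_mul_one_div, mul_comm]
        exact h1
    obtain ⟨ℓ, hext, hle⟩ := exists_extension_of_le_sublinear p F N_hom N_add hfp
    have hℓx : ℓ x = f x := by
      have h1 := hext ⟨x, Submodule.mem_span_singleton_self x⟩
      have h2 : (p ⟨x, Submodule.mem_span_singleton_self x⟩ : ℝ) = f x :=
        LinearPMap.mkSpanSingleton_apply ℝ ℝ hx0 (f x)
      rw [h1, h2]
    set g : Fin n → ℝ := fun i => ℓ (fun j => if i = j then 1 else 0) with hg
    have hgpos : ∀ i, 0 ≤ g i := by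
      intro i
      have h1 : ℓ (-(fun j => if i = j then (1:ℝ) else 0)) ≤
          F (-(fun j => if i = j then (1:ℝ) else 0)) := hle _
      have h2 : F (-(fun j => if i = j then (1:ℝ) else 0)) ≤ f 0 := by
        apply hF_le
        intro j
        by_cases h : i = j <;> simp [h]
      rw [map_neg] at h1
      rw [hf0] at h2
      have := h1.trans h2
      rw [hg]
      linarith
    refine ⟨g, hgpos, fun y => ?_⟩
    have hsum : ∑ i, g i * (y i - x i) = ℓ (y - x) := by
      rw [LinearMap.pi_apply_eq_sum_univ ℓ (y - x)]
      apply Finset.sum_congr rfl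
      intro i _
      simp [hg, Pi.sub_apply, mul_comm]
    have hℓy : ℓ y ≤ f y := (hle y).trans (hF_le y y fun i => le_rfl)
    have : ℓ x + ℓ (y - x) = ℓ y := by rw [← map_add]; ring_nf
    rw [hsum, ← hℓx, this]
    exact hℓy
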